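/- Let γ ∈ ℂ with κ := 2·Re(γ) ≠ 0, let η₁ = (η₁₁, η₁₂) and η₂ = (η₂₁, η₂₂) in ℂ², and let Γ = [[γ, 0],[1, γ]] be the 2×2 lower-triangular Jordan block. Define Ω := κ⁻¹ · Σ_{i=1}^{2} [[ |η_{i1}|² , η_{i1}·conj(η_{i2} − κ⁻¹·η_{i1}) ],[ conj(η_{i1})·(η_{i2} − κ⁻¹·η_{i1}) , |η_{i2} − κ⁻¹·η_{i1}|² + κ⁻²·|η_{i1}|² ]]. Then Γ·Ω + Ω·Γᴴ = η₁·η₁ᴴ + η₂·η₂ᴴ, and det(Ω) = κ⁻⁴·( |η₁₁|² + |η₂₁|² )² + κ⁻²·| η₁₁·η₂₂ − η₁₂·η₂₁ |². -/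
import Mathlib


open Matrix

set_option maxHeartbeats 1000000 in
theorem stmt_6 (γ : ℂ) (κ : ℝ) (hκ : κ = 2 * γ.re) (hκ0 : κ ≠ 0)
    (η₁₁ η₁₂ η₂₁ η₂₂ : ℂ)
    (η₁ η₂ : Matrix (Fin 2) (Fin 1) ℂ)
    (hη₁ : η₁ = !![η₁₁; η₁₂]) (hη₂ : η₂ = !![η₂₁; η₂₂])
    (Γ : Matrix (Fin 2) (Fin 2) ℂ) (hΓ : Γ = !![γ, 0; 1, γ])
    (Ω : Matrix (Fin 2) (Fin 2) ℂ)
    (hΩ : Ω = (κ : ℂ)⁻¹ •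
      (!![((Complex.normSq η₁₁ : ℝ) : ℂ),
            η₁₁ * (starRingEnd ℂ) (η₁₂ - (κ : ℂ)⁻¹ * η₁₁);
          (starRingEnd ℂ) η₁₁ * (η₁₂ - (κ : ℂ)⁻¹ * η₁₁),
            ((Complex.normSq (η₁₂ - (κ : ℂ)⁻¹ * η₁₁) : ℝ) : ℂ)
              + ((κ : ℂ)⁻¹)^2 * ((Complex.normSq η₁₁ : ℝ) : ℂ)]
       + !![((Complex.normSq η₂₁ : ℝ) : ℂ),
            η₂₁ * (starRingEnd ℂ) (η₂₂ - (κ : ℂ)⁻¹ * η₂₁);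
          (starRingEnd ℂ) η₂₁ * (η₂₂ - (κ : ℂ)⁻¹ * η₂₁),
            ((Complex.normSq (η₂₂ - (κ : ℂ)⁻¹ * η₂₁) : ℝ) : ℂ)
              + ((κ : ℂ)⁻¹)^2 * ((Complex.normSq η₂₁ : ℝ) : ℂ)])) :
    Γ * Ω + Ω * Γᴴ = η₁ * η₁ᴴ + η₂ * η₂ᴴ ∧
    Ω.det = ((κ : ℂ)⁻¹)^4 * (((Complex.normSq η₁₁ + Complex.normSq η₂₁ : ℝ) : ℂ))^2
        + ((κ : ℂ)⁻¹)^2 * ((Complex.normSq (η₁₁ * η₂₂ - η₁₂ * η₂₁) : ℝ) : ℂ) := by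
  have hk0 : (κ : ℂ) ≠ 0 := by exact_mod_cast hκ0
  have hk : (κ : ℂ) = γ + (starRingEnd ℂ) γ := by
    push_cast [hκ]; rw [Complex.add_conj]; push_cast; ring
  have hc : (κ : ℂ)⁻¹ * (γ + (starRingEnd ℂ) γ) = 1 := by
    rw [← hk]; exact inv_mul_cancel₀ hk0
  subst hη₁ hη₂ hΓ hΩ
  constructor
  · ext i j
    fin_cases i <;> fin_cases j <;>
      simp only [Matrix.mul_apply, Matrix.add_apply, Matrix.smul_apply,
        Matrix.conjTranspose_apply, Fin.sum_univ_two, Fin.sum_univ_one,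
        Matrix.cons_val', Matrix.cons_val_zero, Matrix.cons_val_one,
        Matrix.head_cons, Matrix.head_fin_const, Matrix.empty_val',
        Matrix.cons_val_fin_one, Matrix.of_apply, Fin.zero_eta, Fin.mk_one,
        Fin.isValue, smul_eq_mul] <;>
      simp only [Complex.star_def, star_zero, star_one,
        Complex.ofReal_add, ← Complex.mul_conj, map_sub, _root_.map_mul,
        map_inv₀, Complex.conj_conj, Complex.conj_ofReal, map_zero, _root_.map_one]
    · linear_combination (η₂₁ * (starRingEnd ℂ) η₂₁ + η₁₁ * (starRingEnd ℂ) η₁₁) * hc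
    · linear_combination (η₂₁ * (starRingEnd ℂ) η₂₂ + η₁₁ * (starRingEnd ℂ) η₁₂
        + (-1:ℂ) * ((κ:ℂ))⁻¹ * η₂₁ * (starRingEnd ℂ) η₂₁
        + (-1:ℂ) * ((κ:ℂ))⁻¹ * η₁₁ * (starRingEnd ℂ) η₁₁) * hc
    · linear_combination (η₂₂ * (starRingEnd ℂ) η₂₁ + η₁₂ * (starRingEnd ℂ) η₁₁
        + (-1:ℂ) * ((κ:ℂ))⁻¹ * η₂₁ * (starRingEnd ℂ) η₂₁
        + (-1:ℂ) * ((κ:ℂ))⁻¹ * η₁₁ * (starRingEnd ℂ) η₁₁) * hc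
    · linear_combination (η₂₂ * (starRingEnd ℂ) η₂₂ + η₁₂ * (starRingEnd ℂ) η₁₂
        + (-1:ℂ) * ((κ:ℂ))⁻¹ * η₂₂ * (starRingEnd ℂ) η₂₁
        + (-1:ℂ) * ((κ:ℂ))⁻¹ * η₂₁ * (starRingEnd ℂ) η₂₂
        + (-1:ℂ) * ((κ:ℂ))⁻¹ * η₁₂ * (starRingEnd ℂ) η₁₁
        + (-1:ℂ) * ((κ:ℂ))⁻¹ * η₁₁ * (starRingEnd ℂ) η₁₂
        + (2:ℂ) * ((κ:ℂ))⁻¹^2 * η₂₁ * (starRingEnd ℂ) η₂₁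
        + (2:ℂ) * ((κ:ℂ))⁻¹^2 * η₁₁ * (starRingEnd ℂ) η₁₁) * hc
  · simp only [Matrix.det_fin_two, Matrix.add_apply, Matrix.smul_apply,
      Matrix.cons_val', Matrix.cons_val_zero, Matrix.cons_val_one,
      Matrix.head_cons, Matrix.empty_val', Matrix.cons_val_fin_one, Matrix.of_apply,
      Fin.zero_eta, Fin.mk_one, Fin.isValue, Matrix.head_fin_const,
      smul_eq_mul, Complex.ofReal_add, ← Complex.mul_conj, map_sub,
      _root_.map_mul, map_inv₀, Complex.conj_conj, Complex.conj_ofReal]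
    ring
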